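/- arXiv:2412.03807 — 5 statements merged into one kernel-verified Lean document; each statement's English description precedes it below -/
import Mathlib

section
/- For a finitely supported complex sequence c with f(x) = Σ_{k} c_k e^{-λ(x-k)²}, the squared modulus satisfies |f(x)|² = Σ_m r_m e^{-2λ(x - m/2)²} for all real x, where r_m = e^{λm²/2} Σ_j c̃_{m-j} conj(c̃_j) and c̃_k = c_k e^{-λk²}. -/
open Complex Pointwise

theorem stmt_0 (l : ℝ) (hl : 0 < l) (c : ℤ → ℂ)
    (hc : (Function.support c).Finite)
    (f : ℝ → ℂ)
    (hf : ∀ x : ℝ, f x = ∑' k : ℤ, c k * Complex.exp (-(l : ℂ) * ((x : ℂ) - (k : ℂ))^2))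
    (ctilde : ℤ → ℂ)
    (hct : ∀ k : ℤ, ctilde k = c k * ((Real.exp (-l * (k : ℝ)^2)) : ℂ))
    (r : ℤ → ℂ)
    (hr : ∀ m : ℤ, r m = ((Real.exp (l * (m : ℝ)^2 / 2)) : ℂ) *
      ∑' j : ℤ, ctilde (m - j) * (starRingEnd ℂ) (ctilde j)) :
    ∀ x : ℝ, ((‖f x‖)^2 : ℂ) =
      ∑' m : ℤ, r m * ((Real.exp (-2 * l * (x - (m : ℝ)/2)^2)) : ℂ) := by
  classical
  intro x
  set T : Finset ℤ := hc.toFinset with hT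
  have hmemT : ∀ k : ℤ, c k ≠ 0 → k ∈ T := fun k h => hc.mem_toFinset.mpr h
  have hexp : ∀ y : ℤ, Complex.exp (-(l : ℂ) * ((x : ℂ) - (y : ℂ))^2)
      = ((Real.exp (-l * (x - (y : ℝ))^2) : ℝ) : ℂ) := by
    intro y
    rw [Complex.ofReal_exp]
    congr 1
    push_cast
    ring
  set a : ℤ → ℂ := fun k => c k * Complex.exp (-(l : ℂ) * ((x : ℂ) - (k : ℂ))^2) with ha
  set b : ℤ → ℂ := fun j => (starRingEnd ℂ) (a j) with hb
  set G : ℤ → ℤ → ℂ := fun m j =>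
    ((Real.exp (l * (m : ℝ)^2 / 2)) : ℂ) * (ctilde (m - j) * (starRingEnd ℂ) (ctilde j)) *
      ((Real.exp (-2 * l * (x - (m : ℝ)/2)^2)) : ℂ) with hG
  have key : ∀ k j : ℤ, G (k + j) j = a k * b j := by
    intro k j
    have L : G (k + j) j = c k * (starRingEnd ℂ) (c j) *
        (((Real.exp (l * (((k + j : ℤ)) : ℝ)^2 / 2) * Real.exp (-l * ((k : ℝ))^2) *
          Real.exp (-l * ((j : ℝ))^2) *
          Real.exp (-2 * l * (x - (((k + j : ℤ)) : ℝ)/2)^2)) : ℝ) : ℂ) := by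
      simp only [hG, hct, add_sub_cancel_right, map_mul, Complex.conj_ofReal]
      push_cast
      ring
    have R : a k * b j = c k * (starRingEnd ℂ) (c j) *
        (((Real.exp (-l * (x - (k : ℝ))^2) * Real.exp (-l * (x - (j : ℝ))^2)) : ℝ) : ℂ) := by
      simp only [ha, hb, hexp, map_mul, Complex.conj_ofReal]
      push_cast
      ring
    rw [L, R]
    congr 1
    norm_cast
    rw [← Real.exp_add, ← Real.exp_add, ← Real.exp_add, ← Real.exp_add, Real.exp_eq_exp]
    push_cast
    ring
  have hsupp : ∀ m j : ℤ, G m j ≠ 0 → (m - j) ∈ T ∧ j ∈ T := by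
    intro m j h
    constructor
    · apply hmemT
      intro h0
      exact h (by simp [hG, hct, h0])
    · apply hmemT
      intro h0
      exact h (by simp [hG, hct, h0])
  have hGsum : Summable (Function.uncurry G) := by
    apply summable_of_ne_finset_zero (s := (T + T) ×ˢ T)
    intro p hp
    by_contra h
    obtain ⟨h1, h2⟩ := hsupp p.1 p.2 h
    apply hp
    rw [Finset.mem_product]
    refine ⟨?_, h2⟩
    have hrw : p.1 = (p.1 - p.2) + p.2 := by ring
    rw [hrw]
    exact Finset.add_mem_add h1 h2
  have hfa : f x = ∑' k : ℤ, a k := by rw [hf x]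
  have hconj : (starRingEnd ℂ) (f x) = ∑' j : ℤ, b j := by
    rw [hfa]
    exact tsum_star
  have step1 : ∀ m : ℤ, r m * ((Real.exp (-2 * l * (x - (m : ℝ)/2)^2)) : ℂ)
      = ∑' j : ℤ, G m j := by
    intro m
    rw [hr m, ← tsum_mul_left, ← tsum_mul_right]
  have step2 : ∀ j : ℤ, ∑' m : ℤ, G m j = (∑' k : ℤ, a k) * b j := by
    intro j
    have e1 : ∑' k : ℤ, G (k + j) j = ∑' m : ℤ, G m j := by
      simpa using (Equiv.addRight j).tsum_eq (fun m => G m j)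
    rw [← e1, tsum_congr (fun k => key k j), tsum_mul_right]
  rw [← Complex.ofReal_pow, Complex.sq_norm, ← Complex.mul_conj]
  calc f x * (starRingEnd ℂ) (f x)
      = (∑' k : ℤ, a k) * ∑' j : ℤ, b j := by rw [hconj, hfa]
    _ = ∑' j : ℤ, (∑' k : ℤ, a k) * b j := tsum_mul_left.symm
    _ = ∑' j : ℤ, ∑' m : ℤ, G m j := tsum_congr fun j => (step2 j).symm
    _ = ∑' m : ℤ, ∑' j : ℤ, G m j := hGsum.tsum_comm
    _ = ∑' m : ℤ, r m * ((Real.exp (-2 * l * (x - (m : ℝ)/2)^2)) : ℂ) :=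
        tsum_congr fun m => (step1 m).symm
end

section
/- For a finitely supported complex sequence c, with f(x) = Σ_k c_k e^{-λ(x-k)²} and ω(x) = Σ_k k c_k e^{-λ(x-k)²}, one has for all real x: |f'(x)|²/(4λ²) = x²|f(x)|² + |ω(x)|² - x Σ_n n r_n e^{-2λ(x - n/2)²}, where r_n = e^{λn²/2} Σ_j c̃_{n-j} conj(c̃_j) and c̃_k = c_k e^{-λk²}. -/
open Complex Pointwise

theorem stmt_2 (l : ℝ) (hl : 0 < l) (c : ℤ → ℂ)
    (hc : (Function.support c).Finite)
    (f ω : ℝ → ℂ)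
    (hf : ∀ x : ℝ, f x = ∑' k : ℤ, c k * Complex.exp (-(l : ℂ) * ((x : ℂ) - (k : ℂ))^2))
    (hw : ∀ x : ℝ, ω x = ∑' k : ℤ, (k : ℂ) * c k * Complex.exp (-(l : ℂ) * ((x : ℂ) - (k : ℂ))^2))
    (ctilde : ℤ → ℂ)
    (hct : ∀ k : ℤ, ctilde k = c k * ((Real.exp (-l * (k : ℝ)^2)) : ℂ))
    (r : ℤ → ℂ)
    (hr : ∀ n : ℤ, r n = ((Real.exp (l * (n : ℝ)^2 / 2)) : ℂ) *
      ∑' j : ℤ, ctilde (n - j) * (starRingEnd ℂ) (ctilde j)) :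
    ∀ x : ℝ, (‖deriv f x‖^2 / (4 * l^2) : ℂ) =
      (x : ℂ)^2 * (‖f x‖^2 : ℂ) + (‖ω x‖^2 : ℂ)
        - (x : ℂ) * ∑' n : ℤ, (n : ℂ) * r n * ((Real.exp (-2 * l * (x - (n : ℝ)/2)^2)) : ℂ) := by
  classical
  set s : Finset ℤ := hc.toFinset with hs
  have hmem : ∀ k : ℤ, k ∈ s ↔ c k ≠ 0 := by
    intro k; simp [hs, Function.mem_support]
  -- finite-sum versions
  have fs : ∀ x : ℝ, f x = ∑ k ∈ s, c k * Complex.exp (-(l : ℂ) * ((x : ℂ) - (k : ℂ))^2) := by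
    intro x; rw [hf x]
    apply tsum_eq_sum
    intro k hk
    have : c k = 0 := by by_contra h; exact hk ((hmem k).2 h)
    simp [this]
  have ws : ∀ x : ℝ, ω x = ∑ k ∈ s, (k : ℂ) * c k * Complex.exp (-(l : ℂ) * ((x : ℂ) - (k : ℂ))^2) := by
    intro x; rw [hw x]
    apply tsum_eq_sum
    intro k hk
    have : c k = 0 := by by_contra h; exact hk ((hmem k).2 h)
    simp [this]
  -- derivative
  have hderiv : ∀ x : ℝ, deriv f x = (-2 * (l:ℂ)) * ((x:ℂ) * f x - ω x) := by
    intro x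
    have hfun : f = fun y : ℝ => ∑ k ∈ s, c k * Complex.exp (-(l : ℂ) * ((y : ℂ) - (k : ℂ))^2) :=
      funext fs
    have hterm : ∀ k ∈ s, HasDerivAt (fun y : ℝ => c k * Complex.exp (-(l : ℂ) * ((y : ℂ) - (k : ℂ))^2))
        (c k * (Complex.exp (-(l : ℂ) * ((x : ℂ) - (k : ℂ))^2) * (-(l:ℂ) * (2 * ((x:ℂ) - k))))) x := by
      intro k _
      have h1 : HasDerivAt (fun y : ℝ => (y : ℂ)) 1 x := by
        simpa using (hasDerivAt_id x).ofReal_comp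
      have h2 := ((((h1.sub_const (k:ℂ)).fun_mul (h1.sub_const (k:ℂ))).const_mul (-(l:ℂ))).cexp).const_mul (c k)
      simp only [← pow_two] at h2
      convert h2 using 1
      · rfl
      ring
    have hsum := HasDerivAt.fun_sum hterm
    have hd : deriv f x = ∑ k ∈ s, c k * (Complex.exp (-(l : ℂ) * ((x : ℂ) - (k : ℂ))^2) * (-(l:ℂ) * (2 * ((x:ℂ) - k)))) := by
      rw [hfun]; exact hsum.deriv
    rw [hd, fs x, ws x, Finset.mul_sum, ← Finset.sum_sub_distrib, Finset.mul_sum]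
    apply Finset.sum_congr rfl
    intro k _
    ring
  intro x
  have habs : ∀ z : ℂ, ((‖z‖ : ℂ))^2 = z * (starRingEnd ℂ) z := by
    intro z
    rw [← Complex.ofReal_pow, Complex.sq_norm, Complex.mul_conj]
  have hconjE : ∀ k : ℤ, (starRingEnd ℂ) (Complex.exp (-(l:ℂ) * ((x:ℂ) - (k:ℂ))^2))
      = Complex.exp (-(l:ℂ) * ((x:ℂ) - (k:ℂ))^2) := by
    intro k
    rw [← Complex.exp_conj]
    congr 1
    simp [map_mul, map_pow, map_sub, map_neg, Complex.conj_ofReal]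
  have hct0 : ∀ j ∉ s, ctilde j = 0 := by
    intro j hj
    have : c j = 0 := by by_contra h; exact hj ((hmem j).2 h)
    simp [hct, this]
  -- per-n formula
  have hrn : ∀ n : ℤ, (n:ℂ) * r n * ((Real.exp (-2 * l * (x - (n:ℝ)/2)^2)) : ℂ) =
      ∑ j ∈ s, (n:ℂ) * (c (n-j) * (starRingEnd ℂ) (c j) *
        (Complex.exp (-(l:ℂ) * ((x:ℂ) - ((n-j : ℤ):ℂ))^2) * Complex.exp (-(l:ℂ) * ((x:ℂ) - (j:ℂ))^2))) := by
    intro n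
    rw [hr n]
    rw [tsum_eq_sum (s := s) (by intro j hj; simp [hct0 j hj])]
    rw [Finset.mul_sum, Finset.mul_sum, Finset.sum_mul]
    apply Finset.sum_congr rfl
    intro j hj
    rw [hct (n-j), hct j, map_mul, Complex.conj_ofReal]
    rw [Complex.ofReal_exp, Complex.ofReal_exp, Complex.ofReal_exp, Complex.ofReal_exp]
    calc (n:ℂ) * (Complex.exp ((l * (n:ℝ)^2/2 : ℝ):ℂ) * (c (n-j) * Complex.exp (((-l * (((n-j):ℤ):ℝ)^2 : ℝ)):ℂ) * ((starRingEnd ℂ) (c j) * Complex.exp (((-l * ((j:ℤ):ℝ)^2 : ℝ)):ℂ)))) * Complex.exp (((-2 * l * (x - (n:ℝ)/2)^2 : ℝ)):ℂ)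
        = ((n:ℂ) * (c (n-j) * (starRingEnd ℂ) (c j))) *
          (Complex.exp ((l * (n:ℝ)^2/2 : ℝ):ℂ) * Complex.exp (((-l * (((n-j):ℤ):ℝ)^2 : ℝ)):ℂ) *
            Complex.exp (((-l * ((j:ℤ):ℝ)^2 : ℝ)):ℂ) * Complex.exp (((-2 * l * (x - (n:ℝ)/2)^2 : ℝ)):ℂ)) := by ring
      _ = ((n:ℂ) * (c (n-j) * (starRingEnd ℂ) (c j))) *
          (Complex.exp (-(l:ℂ) * ((x:ℂ) - ((n-j : ℤ):ℂ))^2) * Complex.exp (-(l:ℂ) * ((x:ℂ) - (j:ℂ))^2)) := by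
        congr 1
        rw [← Complex.exp_add, ← Complex.exp_add, ← Complex.exp_add, ← Complex.exp_add]
        congr 1
        push_cast
        ring
      _ = (n:ℂ) * (c (n-j) * (starRingEnd ℂ) (c j) *
          (Complex.exp (-(l:ℂ) * ((x:ℂ) - ((n-j : ℤ):ℂ))^2) * Complex.exp (-(l:ℂ) * ((x:ℂ) - (j:ℂ))^2))) := by ring
  -- r vanishes off s + s
  have hr0 : ∀ n : ℤ, n ∉ s + s → r n = 0 := by
    intro n hn
    rw [hr n]
    have hz : ∀ j : ℤ, ctilde (n - j) * (starRingEnd ℂ) (ctilde j) = 0 := by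
      intro j
      by_cases hj : j ∈ s
      · have hnj : n - j ∉ s := by
          intro h
          exact hn (by simpa using Finset.add_mem_add h hj)
        simp [hct0 _ hnj]
      · simp [hct0 _ hj]
    rw [tsum_congr hz, tsum_zero, mul_zero]
  have hsum_eq : (∑' n : ℤ, (n:ℂ) * r n * ((Real.exp (-2 * l * (x - (n:ℝ)/2)^2)) : ℂ)) =
      ∑ n ∈ s + s, (n:ℂ) * r n * ((Real.exp (-2 * l * (x - (n:ℝ)/2)^2)) : ℂ) := by
    apply tsum_eq_sum
    intro n hn
    rw [hr0 n hn]
    ring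
  -- the key identity
  have hS : (∑' n : ℤ, (n:ℂ) * r n * ((Real.exp (-2 * l * (x - (n:ℝ)/2)^2)) : ℂ)) =
      f x * (starRingEnd ℂ) (ω x) + ω x * (starRingEnd ℂ) (f x) := by
    rw [hsum_eq]
    have step1 : (∑ n ∈ s + s, (n:ℂ) * r n * ((Real.exp (-2 * l * (x - (n:ℝ)/2)^2)) : ℂ)) =
        ∑ j ∈ s, ∑ n ∈ s + s, (n:ℂ) * (c (n-j) * (starRingEnd ℂ) (c j) *
          (Complex.exp (-(l:ℂ) * ((x:ℂ) - ((n-j : ℤ):ℂ))^2) * Complex.exp (-(l:ℂ) * ((x:ℂ) - (j:ℂ))^2))) := by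
      rw [← Finset.sum_comm]
      exact Finset.sum_congr rfl (fun n _ => hrn n)
    rw [step1]
    have step2 : ∀ j ∈ s, (∑ n ∈ s + s, (n:ℂ) * (c (n-j) * (starRingEnd ℂ) (c j) *
          (Complex.exp (-(l:ℂ) * ((x:ℂ) - ((n-j : ℤ):ℂ))^2) * Complex.exp (-(l:ℂ) * ((x:ℂ) - (j:ℂ))^2)))) =
        ∑ k ∈ s, ((k:ℂ) + (j:ℂ)) * (c k * (starRingEnd ℂ) (c j) *
          (Complex.exp (-(l:ℂ) * ((x:ℂ) - (k:ℂ))^2) * Complex.exp (-(l:ℂ) * ((x:ℂ) - (j:ℂ))^2))) := by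
      intro j hj
      have hsub : s.image (fun k => k + j) ⊆ s + s := by
        intro n hn
        obtain ⟨k, hk, rfl⟩ := Finset.mem_image.1 hn
        exact Finset.add_mem_add hk hj
      rw [← Finset.sum_subset hsub (by
        intro n hn hn'
        have hcz : c (n - j) = 0 := by
          by_contra h
          exact hn' (Finset.mem_image.2 ⟨n - j, (hmem _).2 h, by ring⟩)
        simp [hcz])]
      rw [Finset.sum_image (by intro a _ b _ h; exact add_right_cancel h)]
      apply Finset.sum_congr rfl
      intro k _
      have h1 : k + j - j = k := by ring
      rw [h1]
      push_cast
      ring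
    rw [Finset.sum_congr rfl step2]
    rw [fs x, ws x, map_sum, map_sum]
    rw [Finset.sum_mul_sum, Finset.sum_mul_sum]
    rw [Finset.sum_comm (s := s) (t := s)]
    rw [← Finset.sum_add_distrib]
    apply Finset.sum_congr rfl
    intro j _
    rw [← Finset.sum_add_distrib]
    apply Finset.sum_congr rfl
    intro k _
    simp only [map_mul, map_intCast, hconjE]
    ring
  rw [hderiv x, habs, habs, habs, hS]
  have hl' : (l:ℂ) ≠ 0 := by exact_mod_cast hl.ne'
  simp only [map_mul, map_sub, map_neg, map_ofNat, Complex.conj_ofReal]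
  field_simp
  ring
end

section
/- For a polynomial f (as a nonzero entire function of finite order) satisfying f·f^♮ = g·g^♮ and f'·(f')^♮ = g'·(g')^♮ with g also a polynomial, there exists a unimodular constant α such that f = α·g or f = α·g^♮. (Polynomial case of the conjugate phase retrieval lemma.) -/
open Complex Polynomial

noncomputable def nqc (r : Polynomial ℂ) : Polynomial ℂ := (r.map (starRingEnd ℂ)).comp (-X)

lemma eval_nqc (r : Polynomial ℂ) (z : ℂ) :
    (nqc r).eval z = (starRingEnd ℂ) (r.eval (-(starRingEnd ℂ) z)) := by
  rw [nqc, eval_comp, eval_neg, eval_X, eval_map,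
    show (-z) = (starRingEnd ℂ) (-(starRingEnd ℂ) z) by simp, eval₂_at_apply]

lemma derivative_nqc (r : Polynomial ℂ) :
    derivative (nqc r) = - nqc (derivative r) := by
  simp [nqc, derivative_comp, derivative_map]

lemma nqc_ne_zero {r : Polynomial ℂ} (hr : r ≠ 0) : nqc r ≠ 0 := by
  intro h
  apply hr
  apply Polynomial.funext
  intro z
  have := eval_nqc r ((starRingEnd ℂ) (-z))
  rw [h] at this
  simp at this
  exact (starRingEnd ℂ).injective (by simpa using this.symm)

lemma nqc_C_mul (c : ℂ) (r : Polynomial ℂ) :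
    nqc (C c * r) = C ((starRingEnd ℂ) c) * nqc r := by
  simp [nqc, Polynomial.map_mul, mul_comp]

lemma nqc_nqc (r : Polynomial ℂ) : nqc (nqc r) = r := by
  apply Polynomial.funext
  intro z
  rw [eval_nqc, eval_nqc]
  simp

lemma lc_der (p : Polynomial ℂ) (hp : p.natDegree ≠ 0) :
    (derivative p).natDegree = p.natDegree - 1 ∧
      (derivative p).leadingCoeff = (p.natDegree : ℂ) * p.leadingCoeff := by
  have hp0 : p ≠ 0 := by rintro rfl; simp at hp
  have hc : (derivative p).coeff (p.natDegree - 1) = (p.natDegree : ℂ) * p.leadingCoeff := by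
    rw [coeff_derivative, Nat.sub_add_cancel (Nat.one_le_iff_ne_zero.mpr hp)]
    rw [Polynomial.leadingCoeff]
    push_cast [Nat.cast_sub (Nat.one_le_iff_ne_zero.mpr hp)]
    ring
  have hne : (p.natDegree : ℂ) * p.leadingCoeff ≠ 0 :=
    mul_ne_zero (Nat.cast_ne_zero.mpr hp) (leadingCoeff_ne_zero.mpr hp0)
  have h1 : (derivative p).natDegree ≤ p.natDegree - 1 := natDegree_derivative_le p
  have h2 : p.natDegree - 1 ≤ (derivative p).natDegree :=
    le_natDegree_of_ne_zero (by rw [hc]; exact hne)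
  have hd : (derivative p).natDegree = p.natDegree - 1 := le_antisymm h1 h2
  exact ⟨hd, by rw [Polynomial.leadingCoeff, hd, hc]⟩

lemma wronskian_aux : ∀ n : ℕ, ∀ p q : Polynomial ℂ, p.natDegree ≤ n → q ≠ 0 →
    derivative p * q = p * derivative q → ∃ c : ℂ, p = C c * q := by
  intro n
  induction n with
  | zero =>
    intro p q hpn hq h
    have hp' : derivative p = 0 := by
      rw [Polynomial.eq_C_of_natDegree_eq_zero (Nat.le_zero.mp hpn)]; simp
    rw [hp', zero_mul] at h
    rcases mul_eq_zero.mp h.symm with h0 | h0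
    · exact ⟨0, by simp [h0]⟩
    · have hqc : q = C (q.coeff 0) := eq_C_of_derivative_eq_zero h0
      have hq0 : q.coeff 0 ≠ 0 := by intro hz; rw [hqc, hz] at hq; simp at hq
      refine ⟨p.coeff 0 / q.coeff 0, ?_⟩
      rw [Polynomial.eq_C_of_natDegree_eq_zero (Nat.le_zero.mp hpn)]
      rw [hqc, ← C_mul]
      congr 1
      field_simp
      simp [hq0]
  | succ n ih =>
    intro p q hpn hq h
    by_cases hp' : derivative p = 0
    · rw [hp', zero_mul] at h
      rcases mul_eq_zero.mp h.symm with h0 | h0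
      · exact ⟨0, by simp [h0]⟩
      · have hqc : q = C (q.coeff 0) := eq_C_of_derivative_eq_zero h0
        have hq0 : q.coeff 0 ≠ 0 := by intro hz; rw [hqc, hz] at hq; simp at hq
        refine ⟨p.coeff 0 / q.coeff 0, ?_⟩
        rw [eq_C_of_derivative_eq_zero hp', hqc, ← C_mul]
        congr 1
        field_simp
        simp [hq0]
    · have hp0 : p ≠ 0 := by rintro rfl; simp at hp'
      have hq' : derivative q ≠ 0 := by
        rintro h0
        rw [h0, mul_zero] at h
        exact hp' ((mul_eq_zero.mp h).resolve_right hq)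
      have hnp : p.natDegree ≠ 0 := fun h0 => hp' (by
        rw [Polynomial.eq_C_of_natDegree_eq_zero h0]; simp)
      have hnq : q.natDegree ≠ 0 := fun h0 => hq' (by
        rw [Polynomial.eq_C_of_natDegree_eq_zero h0]; simp)
      obtain ⟨_, hlcp⟩ := lc_der p hnp
      obtain ⟨_, hlcq⟩ := lc_der q hnq
      have hLC : (derivative p).leadingCoeff * q.leadingCoeff
          = p.leadingCoeff * (derivative q).leadingCoeff := by
        rw [← leadingCoeff_mul, ← leadingCoeff_mul, h]
      rw [hlcp, hlcq] at hLC
      have hlp0 : p.leadingCoeff ≠ 0 := leadingCoeff_ne_zero.mpr hp0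
      have hlq0 : q.leadingCoeff ≠ 0 := leadingCoeff_ne_zero.mpr hq
      have hdeq : p.natDegree = q.natDegree := by
        have h1 : (p.natDegree : ℂ) * (p.leadingCoeff * q.leadingCoeff)
            = (q.natDegree : ℂ) * (p.leadingCoeff * q.leadingCoeff) := by
          linear_combination hLC
        have := mul_right_cancel₀ (mul_ne_zero hlp0 hlq0) h1
        exact_mod_cast this
      set c : ℂ := p.leadingCoeff / q.leadingCoeff with hc
      set r : Polynomial ℂ := p - C c * q with hr
      have hco : r.coeff p.natDegree = 0 := by
        rw [hr]
        simp only [coeff_sub, coeff_C_mul]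
        have e1 : p.coeff p.natDegree = p.leadingCoeff := coeff_natDegree
        have e2 : q.coeff p.natDegree = q.leadingCoeff := by rw [hdeq]; exact coeff_natDegree
        rw [e1, e2, hc]
        field_simp
        simp
      by_cases hr0 : r = 0
      · exact ⟨c, by rw [← sub_eq_zero]; exact hr ▸ hr0⟩
      · have hrle : r.natDegree ≤ p.natDegree := by
          refine le_trans (natDegree_sub_le _ _) ?_
          simp only [max_le_iff]
          exact ⟨le_refl _, le_trans (natDegree_C_mul_le _ _) (le_of_eq hdeq.symm)⟩
        have hrlt : r.natDegree < p.natDegree := by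
          rcases lt_or_eq_of_le hrle with h' | h'
          · exact h'
          · exact absurd (by rw [← coeff_natDegree, h']; exact hco)
              (leadingCoeff_ne_zero.mpr hr0)
        have hrn : r.natDegree ≤ n := by omega
        have hrw : derivative r * q = r * derivative q := by
          have hdr : derivative r = derivative p - C c * derivative q := by
            rw [hr]; simp
          rw [hdr, hr]
          ring_nf
          linear_combination h
        obtain ⟨c', hc'⟩ := ih r q hrn hq hrw
        rcases eq_or_ne c' 0 with rfl | hc'0
        · simp only [map_zero, zero_mul] at hc'
          exact absurd hc' hr0
        · exfalso
          have : r.natDegree = q.natDegree := by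
            rw [hc', natDegree_C_mul hc'0]
          omega

lemma unimod_of_mul_conj {c : ℂ} (h : c * (starRingEnd ℂ) c = 1) : ‖c‖ = 1 := by
  have h1 : ‖c‖ ^ 2 = 1 := by
    rw [Complex.sq_norm]
    exact_mod_cast (Complex.mul_conj c) ▸ congrArg Complex.re h
  nlinarith [norm_nonneg c]

theorem stmt_9 (p q : Polynomial ℂ) (hp : p ≠ 0) (hq : q ≠ 0)
    (h1 : ∀ z : ℂ, p.eval z * (starRingEnd ℂ) (p.eval (-(starRingEnd ℂ) z))
      = q.eval z * (starRingEnd ℂ) (q.eval (-(starRingEnd ℂ) z)))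
    (h2 : ∀ z : ℂ, (Polynomial.derivative p).eval z
        * (starRingEnd ℂ) ((Polynomial.derivative p).eval (-(starRingEnd ℂ) z))
      = (Polynomial.derivative q).eval z
        * (starRingEnd ℂ) ((Polynomial.derivative q).eval (-(starRingEnd ℂ) z))) :
    ∃ α : ℂ, ‖α‖ = 1 ∧
      ((∀ z : ℂ, p.eval z = α * q.eval z)
        ∨ (∀ z : ℂ, p.eval z = α * (starRingEnd ℂ) (q.eval (-(starRingEnd ℂ) z)))) := by
  have hA : p * nqc p = q * nqc q := by
    apply Polynomial.funext; intro z
    simp only [eval_mul, eval_nqc]; exact h1 z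
  have hB : derivative p * nqc (derivative p) = derivative q * nqc (derivative q) := by
    apply Polynomial.funext; intro z
    simp only [eval_mul, eval_nqc]; exact h2 z
  have hB' : derivative p * derivative (nqc p) = derivative q * derivative (nqc q) := by
    rw [derivative_nqc, derivative_nqc]
    linear_combination (-1 : Polynomial ℂ) * hB
  have hA' : derivative p * nqc p + p * derivative (nqc p)
      = derivative q * nqc q + q * derivative (nqc q) := by
    have := congrArg derivative hA
    simpa [derivative_mul] using this
  have hfact : (derivative p * nqc p - derivative q * nqc q)
      * (derivative p * nqc p - q * derivative (nqc q)) = 0 := by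
    linear_combination (derivative p * nqc p) * hA'
      + (-(q * nqc q)) * hB' + (-(derivative p * derivative (nqc p))) * hA
  have hNp : nqc p ≠ 0 := nqc_ne_zero hp
  have hNq : nqc q ≠ 0 := nqc_ne_zero hq
  rcases mul_eq_zero.mp hfact with hcase | hcase
  · -- p' Np = q' Nq  ⇒ p = c q
    have hc : derivative p * nqc p = derivative q * nqc q := sub_eq_zero.mp hcase
    have hw0 : nqc p * (derivative p * q - p * derivative q) = 0 := by
      linear_combination q * hc + (- derivative q) * hA
    have hw : derivative p * q = p * derivative q :=
      sub_eq_zero.mp ((mul_eq_zero.mp hw0).resolve_left hNp)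
    obtain ⟨c, hpc⟩ := wronskian_aux p.natDegree p q (le_refl _) hq hw
    have hc0 : c ≠ 0 := by rintro rfl; simp at hpc; exact hp hpc
    have hcc : c * (starRingEnd ℂ) c = 1 := by
      have := hA
      rw [hpc, nqc_C_mul] at this
      have h3 : (C (c * (starRingEnd ℂ) c) - 1) * (q * nqc q) = 0 := by
        rw [map_mul]; linear_combination this
      have h4 : C (c * (starRingEnd ℂ) c) - 1 = 0 :=
        (mul_eq_zero.mp h3).resolve_right (mul_ne_zero hq hNq)
      have h5 : C (c * (starRingEnd ℂ) c) = C 1 := by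
        rw [sub_eq_zero] at h4; simpa using h4
      exact C_injective h5
    refine ⟨c, unimod_of_mul_conj hcc, Or.inl fun z => ?_⟩
    rw [hpc]; simp
  · -- p' Np = q (Nq)'  ⇒ p = c Nq
    have hc : derivative p * nqc p = q * derivative (nqc q) := sub_eq_zero.mp hcase
    have hw0 : nqc p * (derivative p * nqc q - p * derivative (nqc q)) = 0 := by
      linear_combination nqc q * hc + (- derivative (nqc q)) * hA
    have hw : derivative p * nqc q = p * derivative (nqc q) :=
      sub_eq_zero.mp ((mul_eq_zero.mp hw0).resolve_left hNp)
    obtain ⟨c, hpc⟩ := wronskian_aux p.natDegree p (nqc q) (le_refl _) hNq hw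
    have hcc : c * (starRingEnd ℂ) c = 1 := by
      have h6 := hA
      rw [hpc, nqc_C_mul, nqc_nqc] at h6
      have h3 : (C (c * (starRingEnd ℂ) c) - 1) * (q * nqc q) = 0 := by
        rw [map_mul]; linear_combination h6
      have h4 : C (c * (starRingEnd ℂ) c) - 1 = 0 :=
        (mul_eq_zero.mp h3).resolve_right (mul_ne_zero hq hNq)
      have h5 : C (c * (starRingEnd ℂ) c) = C 1 := by
        rw [sub_eq_zero] at h4; simpa using h4
      exact C_injective h5
    refine ⟨c, unimod_of_mul_conj hcc, Or.inr fun z => ?_⟩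
    rw [hpc]
    rw [eval_mul, eval_C, eval_nqc]
end

section
/- For a finitely supported sequence c with f(x) = Σ_{k=K_-}^{K_+} c_k e^{-(x-k)²}, c_{K_-} ≠ 0, and c̃_k = c_k e^{-k²}: the coefficient A_{2K_-+1} of the expansion e^{2x²}|f(x)|² = Σ_m A_m e^{2mx} equals 2·c̃_{K_-}·Re(c̃_{K_-+1}) when c̃_{K_-} is a positive real; consequently Re(c̃_{K_-+1}) = A_{2K_-+1}/(2√A_{2K_-}). -/
open Complex

theorem stmt_14 (Km Kp : ℤ) (hK : Km < Kp)
    (c : ℤ → ℂ) (hsupp : ∀ k : ℤ, k ∉ Finset.Icc Km Kp → c k = 0) (hKm : c Km ≠ 0)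
    (f : ℝ → ℂ)
    (hf : ∀ x : ℝ, f x = ∑ k ∈ Finset.Icc Km Kp,
      c k * Complex.exp (-(((x : ℂ) - (k : ℂ))^2)))
    (ctilde : ℤ → ℂ)
    (hct : ∀ k : ℤ, ctilde k = c k * ((Real.exp (-(k : ℝ)^2)) : ℂ))
    (hreal : (ctilde Km).im = 0) (hpos : 0 < (ctilde Km).re)
    (A : ℤ → ℂ)
    (hA : ∀ m : ℤ, A m = ∑ j ∈ Finset.Icc Km Kp, ctilde (m - j) * (starRingEnd ℂ) (ctilde j)) :
    (∀ x : ℝ, ((Real.exp (2 * x^2)) : ℂ) * ((‖f x‖)^2 : ℂ) =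
        ∑ m ∈ Finset.Icc (2 * Km) (2 * Kp), A m * Complex.exp (2 * (m : ℂ) * (x : ℂ)))
      ∧ A (2 * Km + 1) = 2 * ctilde Km * (((ctilde (Km + 1)).re : ℝ) : ℂ)
      ∧ (ctilde (Km + 1)).re = (A (2 * Km + 1)).re / (2 * Real.sqrt ((A (2 * Km)).re)) := by
  have hct0 : ∀ k : ℤ, k ∉ Finset.Icc Km Kp → ctilde k = 0 := fun k hk => by
    rw [hct, hsupp k hk, zero_mul]
  set r : ℝ := (ctilde Km).re with hr
  have hKmr : ctilde Km = (r : ℂ) := by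
    apply Complex.ext <;> simp [hreal, hr]
  set ρ : ℝ := (ctilde (Km + 1)).re with hρ
  -- Part 2
  have hpair : Finset.Icc Km (Km + 1) = ({Km, Km + 1} : Finset ℤ) := by
    ext j; simp [Finset.mem_Icc]; omega
  have hA1 : A (2 * Km + 1) = 2 * ctilde Km * ((ρ : ℝ) : ℂ) := by
    rw [hA]
    have hsub : Finset.Icc Km (Km + 1) ⊆ Finset.Icc Km Kp := by
      apply Finset.Icc_subset_Icc le_rfl; omega
    rw [← Finset.sum_subset hsub (by
      intro j hj hj'
      have h1 : 2 * Km + 1 - j ∉ Finset.Icc Km Kp := by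
        simp only [Finset.mem_Icc] at *; omega
      rw [hct0 _ h1, zero_mul])]
    rw [hpair, Finset.sum_pair (by omega)]
    have h2 : (2 : ℤ) * Km + 1 - Km = Km + 1 := by ring
    have h3 : (2 : ℤ) * Km + 1 - (Km + 1) = Km := by ring
    rw [h2, h3, hKmr, Complex.conj_ofReal]
    have : ctilde (Km + 1) * (r : ℂ) + (r : ℂ) * (starRingEnd ℂ) (ctilde (Km + 1))
        = (r : ℂ) * (ctilde (Km + 1) + (starRingEnd ℂ) (ctilde (Km + 1))) := by ring
    rw [this, Complex.add_conj]
    push_cast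
    ring
  have hA0 : A (2 * Km) = ((r : ℂ)) * ((r : ℂ)) := by
    rw [hA]
    rw [Finset.sum_eq_single_of_mem Km (by simp [Finset.mem_Icc]; omega) (by
      intro j hj hne
      have h1 : 2 * Km - j ∉ Finset.Icc Km Kp := by
        simp only [Finset.mem_Icc] at *; omega
      rw [hct0 _ h1, zero_mul])]
    have h2 : (2 : ℤ) * Km - Km = Km := by ring
    rw [h2, hKmr, Complex.conj_ofReal]
  refine ⟨?_, hA1, ?_⟩
  · -- main expansion
    intro x
    have hE : ∀ a : ℤ, Complex.exp (2 * (a : ℂ) * (x : ℂ)) = ((Real.exp (2 * a * x) : ℝ) : ℂ) := by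
      intro a; rw [Complex.ofReal_exp]; push_cast; ring_nf
    have hterm : ∀ k : ℤ, c k * Complex.exp (-(((x : ℂ) - (k : ℂ))^2))
        = ((Real.exp (-(x^2)) : ℝ) : ℂ) * (ctilde k * ((Real.exp (2 * k * x) : ℝ) : ℂ)) := by
      intro k
      have : Complex.exp (-(((x : ℂ) - (k : ℂ))^2))
          = ((Real.exp (-(x^2)) * Real.exp (2 * k * x) * Real.exp (-((k : ℝ)^2)) : ℝ) : ℂ) := by
        rw [← Real.exp_add, ← Real.exp_add, Complex.ofReal_exp]
        congr 1
        push_cast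
        ring
      rw [this, hct]
      push_cast
      ring
    have hfS : f x = ((Real.exp (-(x^2)) : ℝ) : ℂ) *
        ∑ k ∈ Finset.Icc Km Kp, ctilde k * ((Real.exp (2 * k * x) : ℝ) : ℂ) := by
      rw [hf, Finset.mul_sum]
      exact Finset.sum_congr rfl fun k _ => hterm k
    have habs : ((‖f x‖ : ℂ))^2 = f x * (starRingEnd ℂ) (f x) := by
      rw [Complex.mul_conj]
      norm_cast
      exact Complex.sq_norm _
    have hconj : (starRingEnd ℂ) (f x) = ((Real.exp (-(x^2)) : ℝ) : ℂ) *
        ∑ k ∈ Finset.Icc Km Kp, (starRingEnd ℂ) (ctilde k) * ((Real.exp (2 * k * x) : ℝ) : ℂ) := by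
      rw [hfS, map_mul, map_sum, Complex.conj_ofReal]
      congr 1
      exact Finset.sum_congr rfl fun k _ => by rw [map_mul, Complex.conj_ofReal]
    have LHSeq : ((Real.exp (2 * x^2)) : ℂ) * ((‖f x‖)^2 : ℂ)
        = (∑ k ∈ Finset.Icc Km Kp, ctilde k * ((Real.exp (2 * k * x) : ℝ) : ℂ)) *
          (∑ k ∈ Finset.Icc Km Kp, (starRingEnd ℂ) (ctilde k) * ((Real.exp (2 * k * x) : ℝ) : ℂ)) := by
      rw [habs, hconj, hfS]
      have h1 : (Real.exp (2 * x^2) : ℂ) * ((Real.exp (-(x^2)) : ℝ) : ℂ) *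
          ((Real.exp (-(x^2)) : ℝ) : ℂ) = 1 := by
        norm_cast
        rw [← Real.exp_add, ← Real.exp_add,
          show 2 * x^2 + -x^2 + -x^2 = (0:ℝ) by ring, Real.exp_zero]
      calc (Real.exp (2 * x^2) : ℂ) *
            (((Real.exp (-(x^2)) : ℝ) : ℂ) * (∑ k ∈ Finset.Icc Km Kp, ctilde k * ((Real.exp (2 * k * x) : ℝ) : ℂ)) *
            (((Real.exp (-(x^2)) : ℝ) : ℂ) * ∑ k ∈ Finset.Icc Km Kp, (starRingEnd ℂ) (ctilde k) * ((Real.exp (2 * k * x) : ℝ) : ℂ)))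
          = ((Real.exp (2 * x^2) : ℂ) * ((Real.exp (-(x^2)) : ℝ) : ℂ) * ((Real.exp (-(x^2)) : ℝ) : ℂ)) *
            ((∑ k ∈ Finset.Icc Km Kp, ctilde k * ((Real.exp (2 * k * x) : ℝ) : ℂ)) *
            (∑ k ∈ Finset.Icc Km Kp, (starRingEnd ℂ) (ctilde k) * ((Real.exp (2 * k * x) : ℝ) : ℂ))) := by ring
        _ = _ := by rw [h1, one_mul]
    rw [LHSeq, Finset.sum_mul_sum]
    -- RHS
    have RHSeq : ∀ m ∈ Finset.Icc (2 * Km) (2 * Kp),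
        A m * Complex.exp (2 * (m : ℂ) * (x : ℂ)) =
        ∑ j ∈ Finset.Icc Km Kp, ctilde (m - j) * (starRingEnd ℂ) (ctilde j) *
          Complex.exp (2 * (m : ℂ) * (x : ℂ)) := by
      intro m _; rw [hA, Finset.sum_mul]
    rw [Finset.sum_congr rfl RHSeq]
    rw [Finset.sum_comm]
    conv_rhs => rw [Finset.sum_comm]
    apply Finset.sum_congr rfl
    intro j hj
    simp only [Finset.mem_Icc] at hj
    have hmap : Finset.Icc (2*Km) (2*Kp)
        = Finset.map (addRightEmbedding j) (Finset.Icc (2*Km - j) (2*Kp - j)) := by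
      rw [Finset.map_add_right_Icc]; congr 1 <;> ring
    rw [hmap, Finset.sum_map]
    simp only [addRightEmbedding_apply, add_sub_cancel_right]
    have hsub : Finset.Icc Km Kp ⊆ Finset.Icc (2*Km - j) (2*Kp - j) :=
      Finset.Icc_subset_Icc (by omega) (by omega)
    rw [← Finset.sum_subset hsub (fun k _ hk => by rw [hct0 k hk, zero_mul, zero_mul])]
    apply Finset.sum_congr rfl
    intro k _
    have harg : (2 : ℂ) * (((k + j : ℤ) : ℂ)) * x = 2*(k:ℂ)*(x:ℂ) + 2*(j:ℂ)*(x:ℂ) := by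
      push_cast; ring
    rw [harg, Complex.exp_add, hE k, hE j]
    ring
  · -- Part 3
    have h0re : (A (2 * Km)).re = r ^ 2 := by
      rw [hA0]; push_cast; norm_cast; simp [sq]
    have h1re : (A (2 * Km + 1)).re = 2 * r * ρ := by
      rw [hA1, hKmr]; push_cast; norm_cast
    rw [h0re, h1re, Real.sqrt_sq hpos.le]
    field_simp
end

section
/- If two finite Gaussian sums f(x) = Σ_{k=K_-}^{K_+} c_k e^{-λ(x-βk)²} and g(x) = Σ_{k=K_-}^{K_+} c'_k e^{-λ(x-βk)²} satisfy |f(γ)| = |g(γ)| at 2(K_+-K_-)+1 distinct real points γ, then |f(x)| = |g(x)| for all x ∈ ℝ. -/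
open Complex

theorem stmt_18 (l b : ℝ) (hl : 0 < l) (hb : 0 < b) (Km Kp : ℤ) (hK : Km ≤ Kp)
    (c c' : ℤ → ℂ)
    (f g : ℝ → ℂ)
    (hf : ∀ x : ℝ, f x = ∑ k ∈ Finset.Icc Km Kp,
      c k * Complex.exp (-(l : ℂ) * ((x : ℂ) - (b : ℂ) * (k : ℂ))^2))
    (hg : ∀ x : ℝ, g x = ∑ k ∈ Finset.Icc Km Kp,
      c' k * Complex.exp (-(l : ℂ) * ((x : ℂ) - (b : ℂ) * (k : ℂ))^2))
    (Γ : Finset ℝ) (hcard : Γ.card = 2 * (Kp - Km).toNat + 1)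
    (hsamp : ∀ γ ∈ Γ, ‖f γ‖ = ‖g γ‖) :
    ∀ x : ℝ, ‖f x‖ = ‖g x‖ := by
  classical
  set S := Finset.Icc Km Kp with hS
  set N := (Kp - Km).toNat with hN
  -- the real Gaussian
  set E : ℤ → ℝ → ℝ := fun k x => Real.exp (-l * (x - b * k)^2) with hE
  have hEc : ∀ (k : ℤ) (x : ℝ),
      Complex.exp (-(l : ℂ) * ((x : ℂ) - (b : ℂ) * (k : ℂ))^2) = ((E k x : ℝ) : ℂ) := by
    intro k x
    rw [hE]
    simp only
    rw [Complex.ofReal_exp]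
    congr 1
    push_cast
    ring
  set d : ℤ → ℤ → ℂ :=
    fun k j => c k * (starRingEnd ℂ) (c j) - c' k * (starRingEnd ℂ) (c' j) with hd
  set P : Polynomial ℂ := ∑ k ∈ S, ∑ j ∈ S,
      Polynomial.C (d k j * Complex.exp (-(l:ℂ) * b^2 * ((k:ℂ)^2 + (j:ℂ)^2))) *
        Polynomial.X ^ (k + j - 2*Km).toNat with hP
  have key : ∀ x : ℝ, P.eval ((Real.exp (2*l*b*x) : ℝ) : ℂ) =
      Complex.exp (2*l*x^2 - 4*l*b*Km*x) *
        ((‖f x‖^2 - ‖g x‖^2 : ℝ) : ℂ) := by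
    intro x
    have habs : ((‖f x‖^2 - ‖g x‖^2 : ℝ) : ℂ)
        = f x * (starRingEnd ℂ) (f x) - g x * (starRingEnd ℂ) (g x) := by
      rw [Complex.mul_conj, Complex.mul_conj, Complex.sq_norm, Complex.sq_norm]
      push_cast
      ring
    rw [habs, hf, hg]
    simp only [hEc]
    rw [map_sum, map_sum]
    simp only [map_mul, Complex.conj_ofReal]
    rw [Finset.sum_mul_sum, Finset.sum_mul_sum]
    rw [hP, Polynomial.eval_finset_sum]
    simp only [Polynomial.eval_finset_sum, Polynomial.eval_mul, Polynomial.eval_C,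
      Polynomial.eval_pow, Polynomial.eval_X]
    rw [← Finset.sum_sub_distrib, Finset.mul_sum]
    refine Finset.sum_congr rfl fun k hk => ?_
    rw [← Finset.sum_sub_distrib, Finset.mul_sum]
    refine Finset.sum_congr rfl fun j hj => ?_
    have hk' := Finset.mem_Icc.mp hk
    have hj' := Finset.mem_Icc.mp hj
    have hnn : (0:ℤ) ≤ k + j - 2*Km := by omega
    have hcast : (((k + j - 2*Km).toNat : ℕ) : ℂ) = ((k:ℂ) + j - 2*Km) := by
      have h' : (((k + j - 2*Km).toNat : ℕ) : ℤ) = k + j - 2*Km := Int.toNat_of_nonneg hnn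
      calc (((k + j - 2*Km).toNat : ℕ) : ℂ) = ((((k + j - 2*Km).toNat : ℕ) : ℤ) : ℂ) := by
            push_cast; ring
        _ = ((k:ℂ) + j - 2*Km) := by rw [h']; push_cast; ring
    have hpow : ((Real.exp (2*l*b*x) : ℝ) : ℂ) ^ (k + j - 2*Km).toNat
        = Complex.exp (((k:ℂ) + j - 2*Km) * (2*l*b*x)) := by
      rw [Complex.ofReal_exp, ← Complex.exp_nat_mul, hcast]
      push_cast
      ring_nf
    rw [hpow, hE]
    simp only [Complex.ofReal_exp]
    have hexp : Complex.exp (-(l:ℂ) * b^2 * ((k:ℂ)^2 + (j:ℂ)^2)) *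
          Complex.exp (((k:ℂ) + j - 2*Km) * (2*l*b*x))
        = Complex.exp (2*l*x^2 - 4*l*b*Km*x) *
          (Complex.exp (((-l * (x - b * k)^2 : ℝ)):ℂ) * Complex.exp (((-l * (x - b * j)^2 : ℝ)):ℂ)) := by
      rw [← Complex.exp_add, ← Complex.exp_add, ← Complex.exp_add]
      congr 1
      push_cast
      ring
    rw [mul_assoc, hexp, hd]
    simp only
    ring
  -- degree bound
  have hdeg : P.natDegree ≤ 2*N := by
    rw [hP]
    refine Polynomial.natDegree_sum_le_of_forall_le _ _ fun k hk => ?_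
    refine Polynomial.natDegree_sum_le_of_forall_le _ _ fun j hj => ?_
    refine (Polynomial.natDegree_C_mul_le _ _).trans ?_
    rw [Polynomial.natDegree_X_pow]
    have hk' := Finset.mem_Icc.mp hk
    have hj' := Finset.mem_Icc.mp hj
    omega
  -- P vanishes on the image of Γ
  have hinj : Set.InjOn (fun γ : ℝ => ((Real.exp (2*l*b*γ) : ℝ) : ℂ)) Γ := by
    intro a _ a' _ h
    simp only at h
    have h1 : Real.exp (2*l*b*a) = Real.exp (2*l*b*a') := by exact_mod_cast h
    have h2 := Real.exp_injective h1
    have hlb : (2*l*b) ≠ 0 := by positivity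
    exact mul_left_cancel₀ hlb h2
  have hPzero : P = 0 := by
    refine Polynomial.eq_zero_of_natDegree_lt_card_of_eval_eq_zero' P
      (Γ.image fun γ => ((Real.exp (2*l*b*γ) : ℝ) : ℂ)) ?_ ?_
    · intro t ht
      obtain ⟨γ, hγ, rfl⟩ := Finset.mem_image.mp ht
      rw [key γ]
      rw [hsamp γ hγ]
      simp
    · rw [Finset.card_image_of_injOn hinj, hcard]
      omega
  intro x
  have h0 := key x
  rw [hPzero] at h0
  simp only [Polynomial.eval_zero] at h0
  have := (mul_eq_zero.mp h0.symm).resolve_left (Complex.exp_ne_zero _)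
  have h1 : ‖f x‖^2 - ‖g x‖^2 = 0 := by exact_mod_cast this
  have h2 : ‖f x‖^2 = ‖g x‖^2 := by linarith
  nlinarith [norm_nonneg (f x), norm_nonneg (g x)]
end
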